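/- For every λ ∈ ℂ with Re λ ≥ 0, one has Re R_c(λ) ≤ ∫₁^∞ (9π²/16)·κ²·csch(πκ)² dκ, and moreover ∫₁^∞ (9π²/16)·κ²·csch(πκ)² dκ < 1/100. -/

import Mathlib

open MeasureTheory

/-- The continuous-spectrum part of the reduced Evans-function expression. -/
noncomputable def Rc (z : ℂ) : ℂ :=
  ∫ κ in Set.Ioi (1 : ℝ),
    (((9 * Real.pi ^ 2 / 16) * κ ^ 4 * (1 + κ ^ 2) ^ 2 /
        ((κ ^ 2 + 9 / 4) * (κ ^ 2 + 1 / 4)) *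
        (1 / Real.sinh (Real.pi * κ)) ^ 2 : ℝ) : ℂ) * (z + (κ : ℂ) ^ 2 + 1)⁻¹

open MeasureTheory Real Set

noncomputable def Kc : ℝ := 9 * Real.pi ^ 2 / 4 * Real.exp (-2) / (1 - Real.exp (-(2 * Real.pi))) ^ 2

noncomputable def bc : ℝ := 2 * Real.pi - 2

lemma bc_pos : 0 < bc := by
  have := Real.pi_gt_three
  unfold bc; linarith

lemma expE_lt_one : Real.exp (-(2 * Real.pi)) < 1 := by
  have := Real.pi_pos
  exact Real.exp_lt_one_iff.mpr (by linarith)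

lemma Kc_pos : 0 < Kc := by
  have h1 := expE_lt_one
  have h2 := Real.exp_pos (-2)
  have h3 : (0:ℝ) < 1 - Real.exp (-(2 * Real.pi)) := by linarith
  unfold Kc
  exact div_pos (by positivity) (by positivity)

-- exponential integral
lemma exp_int : ∫ x in Set.Ioi (1:ℝ), Real.exp (-(bc * x)) = Real.exp (-bc) / bc := by
  have hb := bc_pos
  have hint : IntegrableOn (fun x : ℝ => Real.exp (-(bc * x))) (Set.Ioi 1) := by
    simpa [neg_mul] using exp_neg_integrableOn_Ioi (1:ℝ) hb
  have hderiv : ∀ x ∈ Set.Ici (1:ℝ),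
      HasDerivAt (fun x : ℝ => -Real.exp (-(bc * x)) / bc) (Real.exp (-(bc * x))) x := by
    intro x _
    have h1 : HasDerivAt (fun x : ℝ => -(bc * x)) (-bc) x := by
      simpa using (hasDerivAt_id x).const_mul (-bc)
    have h2 := (h1.exp.neg).div_const bc
    exact h2.congr_deriv (by rw [mul_neg, neg_neg, mul_div_assoc, div_self hb.ne', mul_one])
  have htend : Filter.Tendsto (fun x : ℝ => -Real.exp (-(bc * x)) / bc) Filter.atTop (nhds 0) := by
    have h1 : Filter.Tendsto (fun x : ℝ => bc * x) Filter.atTop Filter.atTop :=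
      Filter.Tendsto.const_mul_atTop hb Filter.tendsto_id
    have h2 : Filter.Tendsto (fun x : ℝ => Real.exp (-(bc * x))) Filter.atTop (nhds 0) := by
      have := Real.tendsto_exp_neg_atTop_nhds_zero.comp h1
      simpa [Function.comp_def] using this
    have := (h2.neg).div_const bc
    simpa using this
  have := integral_Ioi_of_hasDerivAt_of_tendsto' hderiv hint htend
  rw [this]; ring

-- lower bound on sinh
lemma sinh_lb {κ : ℝ} (hκ : 1 ≤ κ) :
    Real.exp (Real.pi * κ) * ((1 - Real.exp (-(2 * Real.pi))) / 2) ≤ Real.sinh (Real.pi * κ) := by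
  have hπ := Real.pi_pos
  have h1 : Real.exp (-(Real.pi * κ)) = Real.exp (Real.pi * κ) * Real.exp (-(2 * Real.pi * κ)) := by
    rw [← Real.exp_add]; congr 1; ring
  have h2 : Real.exp (-(2 * Real.pi * κ)) ≤ Real.exp (-(2 * Real.pi)) := by
    apply Real.exp_le_exp.mpr; nlinarith
  rw [Real.sinh_eq, h1]
  have hX := Real.exp_pos (Real.pi * κ)
  nlinarith

lemma g_le_h {κ : ℝ} (hκ : 1 ≤ κ) :
    9 * Real.pi ^ 2 / 16 * κ ^ 2 * (1 / Real.sinh (Real.pi * κ)) ^ 2 ≤ Kc * Real.exp (-(bc * κ)) := by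
  have hπ := Real.pi_pos
  have hE := expE_lt_one
  have hc : (0:ℝ) < 1 - Real.exp (-(2 * Real.pi)) := by linarith
  have hX := Real.exp_pos (Real.pi * κ)
  have hS0 : (0:ℝ) < Real.exp (Real.pi * κ) * ((1 - Real.exp (-(2 * Real.pi))) / 2) := by positivity
  have hS : Real.exp (Real.pi * κ) * ((1 - Real.exp (-(2 * Real.pi))) / 2) ≤ Real.sinh (Real.pi * κ) :=
    sinh_lb hκ
  have hκe : κ ≤ Real.exp (κ - 1) := by
    have := Real.add_one_le_exp (κ - 1)
    linarith
  calc 9 * Real.pi ^ 2 / 16 * κ ^ 2 * (1 / Real.sinh (Real.pi * κ)) ^ 2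
      ≤ 9 * Real.pi ^ 2 / 16 * Real.exp (κ - 1) ^ 2 *
        (1 / (Real.exp (Real.pi * κ) * ((1 - Real.exp (-(2 * Real.pi))) / 2))) ^ 2 := by
        gcongr <;> linarith
    _ = Kc * Real.exp (-(bc * κ)) := by
        unfold Kc bc
        have hA : Real.exp (κ - 1) ^ 2 = Real.exp (2 * κ - 2) := by
          rw [sq, ← Real.exp_add]; ring_nf
        have hB : Real.exp (Real.pi * κ) ^ 2 = Real.exp (2 * Real.pi * κ) := by
          rw [sq, ← Real.exp_add]; ring_nf
        have hC : Real.exp (2 * κ - 2)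
            = Real.exp (-2) * Real.exp (-((2 * Real.pi - 2) * κ)) * Real.exp (2 * Real.pi * κ) := by
          rw [← Real.exp_add, ← Real.exp_add]; congr 1; ring
        rw [show (1 / (Real.exp (Real.pi * κ) * ((1 - Real.exp (-(2 * Real.pi))) / 2))) ^ 2
            = 4 / (Real.exp (Real.pi * κ) ^ 2 * (1 - Real.exp (-(2 * Real.pi))) ^ 2) from by
          have hXne := hX.ne'
          have hcne := hc.ne'
          field_simp; ring]
        rw [hA, hB, hC]
        field_simp
        ring

lemma h_integrableOn : IntegrableOn (fun κ : ℝ => Kc * Real.exp (-(bc * κ))) (Set.Ioi 1) := by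
  have := (exp_neg_integrableOn_Ioi (1:ℝ) bc_pos).const_mul Kc
  simpa [neg_mul, IntegrableOn] using this

lemma g_contOn : ContinuousOn
    (fun κ : ℝ => 9 * Real.pi ^ 2 / 16 * κ ^ 2 * (1 / Real.sinh (Real.pi * κ)) ^ 2)
    (Set.Ioi 1) := by
  apply ContinuousOn.mul (Continuous.continuousOn (by continuity))
  apply ContinuousOn.pow
  apply ContinuousOn.div continuousOn_const (Continuous.continuousOn (by continuity))
  intro κ hκ
  have : (0:ℝ) < Real.sinh (Real.pi * κ) := by
    rw [Real.sinh_pos_iff]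
    have := Real.pi_pos
    have : (1:ℝ) < κ := hκ
    nlinarith
  exact this.ne'

lemma g_integrableOn : IntegrableOn
    (fun κ : ℝ => 9 * Real.pi ^ 2 / 16 * κ ^ 2 * (1 / Real.sinh (Real.pi * κ)) ^ 2)
    (Set.Ioi 1) := by
  apply Integrable.mono' h_integrableOn
    (g_contOn.aestronglyMeasurable measurableSet_Ioi)
  refine (ae_restrict_iff' measurableSet_Ioi).mpr (Filter.Eventually.of_forall fun κ hκ => ?_)
  have h1 : (1:ℝ) ≤ κ := le_of_lt hκ
  rw [Real.norm_eq_abs, abs_of_nonneg (by positivity)]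
  exact g_le_h h1

lemma g_integral_le : (∫ κ in Set.Ioi (1:ℝ),
    9 * Real.pi ^ 2 / 16 * κ ^ 2 * (1 / Real.sinh (Real.pi * κ)) ^ 2)
    ≤ Kc * (Real.exp (-bc) / bc) := by
  have h1 : (∫ κ in Set.Ioi (1:ℝ),
      9 * Real.pi ^ 2 / 16 * κ ^ 2 * (1 / Real.sinh (Real.pi * κ)) ^ 2)
      ≤ ∫ κ in Set.Ioi (1:ℝ), Kc * Real.exp (-(bc * κ)) := by
    apply setIntegral_mono_on g_integrableOn h_integrableOn measurableSet_Ioi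
    exact fun κ hκ => g_le_h (le_of_lt hκ)
  have h2 : (∫ κ in Set.Ioi (1:ℝ), Kc * Real.exp (-(bc * κ))) = Kc * (Real.exp (-bc) / bc) := by
    rw [MeasureTheory.integral_const_mul, exp_int]
  linarith

lemma exp_two_pi_ge : (529:ℝ) ≤ Real.exp (2 * Real.pi) := by
  have h1 : (6.283184:ℝ) ≤ 2 * Real.pi := by
    have := Real.pi_gt_d6; norm_num at this ⊢; linarith
  have he1 : (2.7182818283:ℝ) ≤ Real.exp 1 := le_of_lt Real.exp_one_gt_d9
  have he2 : (1.070796:ℝ) ≤ Real.exp 0.070796 := by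
    have := Real.add_one_le_exp (0.070796:ℝ); linarith
  calc (529:ℝ) ≤ 2.7182818283 ^ (6:ℕ) * 1.070796 ^ (4:ℕ) := by norm_num
    _ ≤ Real.exp 1 ^ (6:ℕ) * Real.exp 0.070796 ^ (4:ℕ) := by gcongr <;> norm_num
    _ = Real.exp 6.283184 := by
        rw [← Real.exp_nat_mul, ← Real.exp_nat_mul, ← Real.exp_add]; norm_num
    _ ≤ Real.exp (2 * Real.pi) := Real.exp_le_exp.mpr h1

lemma numeric_bound : Kc * (Real.exp (-bc) / bc) < 1 / 100 := by
  have hπg : (3.141592:ℝ) < Real.pi := by have := Real.pi_gt_d6; norm_num at this ⊢; linarith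
  have hπl : Real.pi < 3.141593 := by have := Real.pi_lt_d6; norm_num at this ⊢; linarith
  have hu : Real.exp (-2) * Real.exp (-bc) = Real.exp (-(2 * Real.pi)) := by
    rw [← Real.exp_add]; unfold bc; congr 1; ring
  have hE1 : Real.exp (-(2 * Real.pi)) ≤ 1 / 529 := by
    rw [Real.exp_neg]
    rw [inv_le_comm₀ (Real.exp_pos _) (by norm_num)]
    simpa using exp_two_pi_ge
  have hE0 : 0 < Real.exp (-(2 * Real.pi)) := Real.exp_pos _
  unfold Kc bc
  unfold bc at hu
  generalize hEg : Real.exp (-(2 * Real.pi)) = E at hu hE1 hE0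
  generalize hFg : Real.exp (-(2 * Real.pi - 2)) = F
  rw [hFg] at hu
  have hF0 : 0 < F := by rw [← hFg]; exact Real.exp_pos _
  have h1E : (0:ℝ) < 1 - E := by nlinarith
  have hb2 : (0:ℝ) < 2 * Real.pi - 2 := by linarith
  have h2 : 9 * Real.pi ^ 2 / 4 * Real.exp (-2) / (1 - E) ^ 2 * (F / (2 * Real.pi - 2))
      = 9 * Real.pi ^ 2 / 4 * (Real.exp (-2) * F) / ((1 - E) ^ 2 * (2 * Real.pi - 2)) := by
    field_simp
  rw [h2, hu, div_lt_iff₀ (by positivity)]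
  have hπ2 : Real.pi ^ 2 < 9.86961 := by nlinarith [mul_pos (sub_pos.mpr hπl) (sub_pos.mpr hπg)]
  have hπ2p : (0:ℝ) < Real.pi ^ 2 := by positivity
  have hA : Real.pi ^ 2 * E ≤ 9.86961 * (1 / 529) := by nlinarith
  have hB : ((528:ℝ)/529) ^ 2 ≤ (1 - E) ^ 2 := by nlinarith
  have hC : ((528:ℝ)/529) ^ 2 * 4.283184 ≤ (1 - E) ^ 2 * (2 * Real.pi - 2) := by nlinarith
  nlinarith [hA, hC]

lemma w_re {z : ℂ} (hz : 0 ≤ z.re) {κ : ℝ} :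
    κ ^ 2 + 1 ≤ (z + (κ : ℂ) ^ 2 + 1).re := by
  have : (z + (κ : ℂ) ^ 2 + 1).re = z.re + (κ ^ 2 + 1) := by
    rw [← Complex.ofReal_pow]
    simp only [Complex.add_re, Complex.ofReal_re, Complex.one_re]
    ring
  rw [this]; linarith

lemma norm_bound {z : ℂ} (hz : 0 ≤ z.re) {κ : ℝ} (hκ : 1 < κ) :
    ‖(((9 * Real.pi ^ 2 / 16) * κ ^ 4 * (1 + κ ^ 2) ^ 2 /
        ((κ ^ 2 + 9 / 4) * (κ ^ 2 + 1 / 4)) *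
        (1 / Real.sinh (Real.pi * κ)) ^ 2 : ℝ) : ℂ) * (z + (κ : ℂ) ^ 2 + 1)⁻¹‖
      ≤ 9 * Real.pi ^ 2 / 16 * κ ^ 2 * (1 / Real.sinh (Real.pi * κ)) ^ 2 := by
  have hκ0 : (0:ℝ) < κ := by linarith
  have hc0 : (0:ℝ) ≤ (9 * Real.pi ^ 2 / 16) * κ ^ 4 * (1 + κ ^ 2) ^ 2 /
      ((κ ^ 2 + 9 / 4) * (κ ^ 2 + 1 / 4)) * (1 / Real.sinh (Real.pi * κ)) ^ 2 := by positivity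
  have hw1 : κ ^ 2 + 1 ≤ (z + (κ : ℂ) ^ 2 + 1).re := w_re hz
  have hwpos : (0:ℝ) < κ ^ 2 + 1 := by positivity
  have hwn : κ ^ 2 + 1 ≤ ‖z + (κ : ℂ) ^ 2 + 1‖ := by
    refine le_trans hw1 ?_
    exact Complex.re_le_norm _
  rw [norm_mul, norm_inv, Complex.norm_real, Real.norm_eq_abs, abs_of_nonneg hc0]
  have hstep : ‖z + (κ : ℂ) ^ 2 + 1‖⁻¹ ≤ (κ ^ 2 + 1)⁻¹ := by
    apply inv_anti₀ hwpos hwn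
  calc (9 * Real.pi ^ 2 / 16) * κ ^ 4 * (1 + κ ^ 2) ^ 2 /
        ((κ ^ 2 + 9 / 4) * (κ ^ 2 + 1 / 4)) *
        (1 / Real.sinh (Real.pi * κ)) ^ 2 * ‖z + (κ : ℂ) ^ 2 + 1‖⁻¹
      ≤ (9 * Real.pi ^ 2 / 16) * κ ^ 4 * (1 + κ ^ 2) ^ 2 /
        ((κ ^ 2 + 9 / 4) * (κ ^ 2 + 1 / 4)) *
        (1 / Real.sinh (Real.pi * κ)) ^ 2 * (κ ^ 2 + 1)⁻¹ := by
        exact mul_le_mul_of_nonneg_left hstep hc0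
    _ = 9 * Real.pi ^ 2 / 16 * (1 / Real.sinh (Real.pi * κ)) ^ 2 *
        (κ ^ 4 * (1 + κ ^ 2) ^ 2 / ((κ ^ 2 + 9 / 4) * (κ ^ 2 + 1 / 4)) * (κ ^ 2 + 1)⁻¹) := by
        ring
    _ ≤ 9 * Real.pi ^ 2 / 16 * (1 / Real.sinh (Real.pi * κ)) ^ 2 * κ ^ 2 := by
        apply mul_le_mul_of_nonneg_left _ (by positivity)
        rw [← div_eq_mul_inv, div_div, div_le_iff₀ (by positivity)]
        nlinarith [sq_nonneg κ, sq_nonneg (κ ^ 2), hκ0]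
    _ = 9 * Real.pi ^ 2 / 16 * κ ^ 2 * (1 / Real.sinh (Real.pi * κ)) ^ 2 := by ring

lemma f_meas {z : ℂ} (hz : 0 ≤ z.re) : AEStronglyMeasurable (fun κ : ℝ =>
    (((9 * Real.pi ^ 2 / 16) * κ ^ 4 * (1 + κ ^ 2) ^ 2 /
        ((κ ^ 2 + 9 / 4) * (κ ^ 2 + 1 / 4)) *
        (1 / Real.sinh (Real.pi * κ)) ^ 2 : ℝ) : ℂ) * (z + (κ : ℂ) ^ 2 + 1)⁻¹)
    (volume.restrict (Set.Ioi (1:ℝ))) := by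
  apply ContinuousOn.aestronglyMeasurable _ measurableSet_Ioi
  apply ContinuousOn.mul
  · apply Continuous.comp_continuousOn Complex.continuous_ofReal
    apply ContinuousOn.mul
    · apply ContinuousOn.div (Continuous.continuousOn (by continuity))
        (Continuous.continuousOn (by continuity))
      intro κ hκ
      have h1 : (1:ℝ) < κ := hκ
      positivity
    · apply ContinuousOn.pow
      apply ContinuousOn.div continuousOn_const (Continuous.continuousOn (by continuity))
      intro κ hκ
      have h1 : (1:ℝ) < κ := hκ
      have := Real.pi_pos
      have : (0:ℝ) < Real.sinh (Real.pi * κ) := by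
        rw [Real.sinh_pos_iff]; nlinarith
      exact this.ne'
  · apply ContinuousOn.inv₀ (Continuous.continuousOn (by continuity))
    intro κ hκ
    have h1 : (1:ℝ) < κ := hκ
    intro h0
    have := w_re hz (κ := κ)
    rw [h0] at this
    simp at this
    nlinarith

/-- For `Re λ ≥ 0`, `Re R_c(λ)` is bounded by `∫₁^∞ (9π²/16) κ² csch(πκ)² dκ`,
and this integral is less than `1/100`. -/
theorem stmt13 :
    (∀ z : ℂ, 0 ≤ z.re →
      (Rc z).re ≤ ∫ κ in Set.Ioi (1 : ℝ),
        (9 * Real.pi ^ 2 / 16) * κ ^ 2 * (1 / Real.sinh (Real.pi * κ)) ^ 2) ∧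
      (∫ κ in Set.Ioi (1 : ℝ),
        (9 * Real.pi ^ 2 / 16) * κ ^ 2 * (1 / Real.sinh (Real.pi * κ)) ^ 2)
        < 1 / 100 := by
  constructor
  · intro z hz
    have hf : IntegrableOn (fun κ : ℝ =>
        (((9 * Real.pi ^ 2 / 16) * κ ^ 4 * (1 + κ ^ 2) ^ 2 /
            ((κ ^ 2 + 9 / 4) * (κ ^ 2 + 1 / 4)) *
            (1 / Real.sinh (Real.pi * κ)) ^ 2 : ℝ) : ℂ) * (z + (κ : ℂ) ^ 2 + 1)⁻¹)
        (Set.Ioi (1:ℝ)) := by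
      apply Integrable.mono' g_integrableOn (f_meas hz)
      exact (ae_restrict_iff' measurableSet_Ioi).mpr
        (Filter.Eventually.of_forall fun κ hκ => norm_bound hz hκ)
    have h1 : (Rc z).re = ∫ κ in Set.Ioi (1:ℝ),
        ((((9 * Real.pi ^ 2 / 16) * κ ^ 4 * (1 + κ ^ 2) ^ 2 /
            ((κ ^ 2 + 9 / 4) * (κ ^ 2 + 1 / 4)) *
            (1 / Real.sinh (Real.pi * κ)) ^ 2 : ℝ) : ℂ) * (z + (κ : ℂ) ^ 2 + 1)⁻¹).re := by
      rw [Rc]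
      exact (integral_re hf).symm
    rw [h1]
    apply setIntegral_mono_on hf.re g_integrableOn measurableSet_Ioi
    intro κ hκ
    exact le_trans (RCLike.re_le_norm _) (norm_bound hz hκ)
  · exact lt_of_le_of_lt g_integral_le numeric_bound
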